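/- Each monoid M_i (i ∈ ℤ₊) is a positive normal affine monoid, isomorphic as a monoid to M = M₀. -/

import Mathlib

open scoped NNReal
noncomputable section

/-- Real image of an integer vector. -/
def toR {r : ℕ} (v : Fin r → ℤ) : Fin r → ℝ := fun i => (v i : ℝ)

/-- The group of differences of a submonoid of an abelian group. -/
def gp {G : Type*} [AddCommGroup G] (M : AddSubmonoid G) : AddSubgroup G :=
  AddSubgroup.closure (M : Set G)

/-- `M` is normal: `c • x ∈ M` for `x ∈ gp M`, `c ≥ 1` implies `x ∈ M`. -/
def IsNormalMonoid {G : Type*} [AddCommGroup G] (M : AddSubmonoid G) : Prop :=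
  ∀ (c : ℕ) (x : G), 0 < c → x ∈ gp M → (c : ℤ) • x ∈ M → x ∈ M

/-- `M` is positive: no nontrivial units. -/
def IsPositiveMonoid {G : Type*} [AddCommGroup G] (M : AddSubmonoid G) : Prop :=
  ∀ x ∈ M, -x ∈ M → x = 0

/-- The cone `ℝ₊M ⊆ ℝ^r` spanned by a submonoid `M ⊆ ℤ^r`. -/
def coneM {r : ℕ} (M : AddSubmonoid (Fin r → ℤ)) : Set (Fin r → ℝ) :=
  (Submodule.span ℝ≥0 (toR '' (M : Set (Fin r → ℤ))) : Submodule ℝ≥0 (Fin r → ℝ))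

/-- The distinguished vector `e = (1,0) ∈ ℤ ⊕ ℤ^r`. -/
def eVec (r : ℕ) : ℤ × (Fin r → ℤ) := (1, 0)

/-- `M_i = (ℝ ⊕ ℝ₊M) ∩ (ℤ(x₁ - ie) + ⋯ + ℤ(x_r - ie))`, with `x_j - ie = (-i, x_j)`. -/
def Mi {r : ℕ} (M : AddSubmonoid (Fin r → ℤ)) (x : Fin r → (Fin r → ℤ)) (i : ℕ) :
    Set (ℤ × (Fin r → ℤ)) :=
  {p | p ∈ AddSubgroup.closure (Set.range fun j => ((-(i : ℤ), x j) : ℤ × (Fin r → ℤ))) ∧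
       toR p.2 ∈ coneM M}

/-- The submonoid (as a set) `ℤ₊e + M_i`. -/
def ZeMi {r : ℕ} (M : AddSubmonoid (Fin r → ℤ)) (x : Fin r → (Fin r → ℤ)) (i : ℕ) :
    Set (ℤ × (Fin r → ℤ)) :=
  {p | ∃ (z : ℕ) (m : ℤ × (Fin r → ℤ)), m ∈ Mi M x i ∧ p = (z : ℤ) • eVec r + m}

namespace St7

lemma dual_sep {r : ℕ} (p : Submodule ℚ (Fin r → ℚ)) (v : Fin r → ℚ) (hv : v ∉ p) :
    ∃ a : Fin r → ℚ, (∀ u ∈ p, ∑ i, a i * u i = 0) ∧ ∑ i, a i * v i ≠ 0 := by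
  have hqv : p.mkQ v ≠ 0 := by
    simpa [Submodule.Quotient.mk_eq_zero] using hv
  have hex : ¬ ∀ g : Module.Dual ℚ ((Fin r → ℚ) ⧸ p), g (p.mkQ v) = 0 := by
    rw [Module.forall_dual_apply_eq_zero_iff ℚ (p.mkQ v)]; exact hqv
  push_neg at hex
  obtain ⟨g, hg⟩ := hex
  set φ : (Fin r → ℚ) →ₗ[ℚ] ℚ := g.comp p.mkQ with hφ
  have hrep : ∀ u : Fin r → ℚ,
      φ u = ∑ i, (fun i => φ fun j => if i = j then 1 else 0) i * u i := by
    intro u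
    rw [LinearMap.pi_apply_eq_sum_univ φ u]
    exact Finset.sum_congr rfl fun i _ => by rw [smul_eq_mul, mul_comm]
  refine ⟨fun i => φ fun j => if i = j then 1 else 0, fun u hu => ?_, ?_⟩
  · rw [← hrep u]
    have h0 : p.mkQ u = 0 := by simpa [Submodule.Quotient.mk_eq_zero] using hu
    simp [hφ, h0]
  · rw [← hrep v]
    simpa [hφ] using hg

lemma swap_sum {r n : ℕ} (a : Fin r → ℚ) (lam : Fin n → ℝ) (W : Fin n → Fin r → ℝ) :
    ∑ i, (a i : ℝ) * ∑ k, lam k * W k i = ∑ k, lam k * ∑ i, (a i : ℝ) * W k i := by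
  simp only [Finset.mul_sum]
  rw [Finset.sum_comm]
  exact Finset.sum_congr rfl fun k _ => Finset.sum_congr rfl fun i _ => by ring

lemma swap_sumQ {r n : ℕ} (a : Fin r → ℚ) (lam : Fin n → ℚ) (W : Fin n → Fin r → ℚ) :
    ∑ i, a i * ∑ k, lam k * W k i = ∑ k, lam k * ∑ i, a i * W k i := by
  simp only [Finset.mul_sum]
  rw [Finset.sum_comm]
  exact Finset.sum_congr rfl fun k _ => Finset.sum_congr rfl fun i _ => by ring

/-- extract coefficients supported on `s` from span membership -/
lemma span_coeffs {r n : ℕ} (w : Fin n → Fin r → ℚ) (v : Fin r → ℚ) (s : Finset (Fin n))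
    (h : v ∈ Submodule.span ℚ (w '' (↑s : Set (Fin n)))) :
    ∃ mu : Fin n → ℚ, (∀ k ∉ s, mu k = 0) ∧ ∀ i, ∑ k, mu k * w k i = v i := by
  rw [Finsupp.mem_span_image_iff_linearCombination] at h
  obtain ⟨l, hls, hlv⟩ := h
  refine ⟨l, fun k hk => (Finsupp.mem_supported' ℚ l).mp hls k (by simpa using hk), fun i => ?_⟩
  have : (Finsupp.linearCombination ℚ w l) i = v i := by rw [hlv]
  rw [Finsupp.linearCombination_apply] at this
  rw [← this, Finsupp.sum, Finset.sum_apply]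
  refine (Finset.sum_subset (Finset.subset_univ l.support) fun k _ hk => by
    simp [Finsupp.notMem_support_iff.mp hk]).symm.trans ?_
  exact Finset.sum_congr rfl fun k _ => by simp


lemma lp_aux {n r : ℕ} (w : Fin n → Fin r → ℚ) (v : Fin r → ℚ) (s : Finset (Fin n)) :
    ∀ lam : Fin n → ℝ, (∀ k, 0 ≤ lam k) → (∀ k ∉ s, lam k = 0) →
    (∀ i, ∑ k, lam k * (w k i : ℝ) = (v i : ℝ)) →
    ∃ mu : Fin n → ℚ, (∀ k, 0 ≤ mu k) ∧ ∀ i, ∑ k, mu k * w k i = v i := by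
  induction s using Finset.strongInduction with
  | _ s IH =>
  intro lam hlam0 hlams hrel
  by_cases hdep : ∃ c : Fin n → ℚ, c ≠ 0 ∧ (∀ k ∉ s, c k = 0) ∧ ∀ i, ∑ k, c k * w k i = 0
  · -- dependent case: reduce support
    obtain ⟨c, hc0, hcs, hcrel⟩ := hdep
    have hk1 : ∃ k, c k ≠ 0 := by
      by_contra h; push_neg at h; exact hc0 (funext fun k => h k)
    have hpos : ∃ c : Fin n → ℚ, (∀ k ∉ s, c k = 0) ∧ (∀ i, ∑ k, c k * w k i = 0)
        ∧ ∃ k, 0 < c k := by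
      obtain ⟨k₁, hk₁⟩ := hk1
      rcases hk₁.lt_or_gt with h | h
      · exact ⟨-c, fun k hk => by simp [hcs k hk], fun i => by
          simpa [Finset.sum_neg_distrib, neg_mul] using congrArg Neg.neg (hcrel i),
          k₁, by simpa using h⟩
      · exact ⟨c, hcs, hcrel, k₁, h⟩
    clear hc0 hcs hcrel hk1 c
    obtain ⟨c, hcs, hcrel, k₁, hk₁⟩ := hpos
    set t : Finset (Fin n) := s.filter (fun k => 0 < c k) with ht
    have hk₁s : k₁ ∈ s := by
      by_contra h; exact absurd (hcs k₁ h) (ne_of_gt hk₁)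
    have htne : t.Nonempty := ⟨k₁, Finset.mem_filter.mpr ⟨hk₁s, hk₁⟩⟩
    obtain ⟨k₀, hk₀t, hmin⟩ := t.exists_min_image (fun k => lam k / (c k : ℝ)) htne
    have hk₀s : k₀ ∈ s := (Finset.mem_filter.mp hk₀t).1
    have hck₀ : 0 < c k₀ := (Finset.mem_filter.mp hk₀t).2
    have hck₀R : (0:ℝ) < (c k₀ : ℝ) := by exact_mod_cast hck₀
    set τ : ℝ := lam k₀ / (c k₀ : ℝ) with hτ
    have hτ0 : 0 ≤ τ := div_nonneg (hlam0 k₀) hck₀R.le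
    set lam' : Fin n → ℝ := fun k => lam k - τ * (c k : ℝ) with hlam'
    have hlam'0 : ∀ k, 0 ≤ lam' k := by
      intro k
      by_cases h : 0 < c k
      · have hks : k ∈ s := by
          by_contra hk; exact absurd (hcs k hk) (ne_of_gt h)
        have := hmin k (Finset.mem_filter.mpr ⟨hks, h⟩)
        have hcR : (0:ℝ) < (c k : ℝ) := by exact_mod_cast h
        simp only [hlam', sub_nonneg, hτ, div_mul_eq_mul_div, div_le_iff₀ hck₀R]
        exact (div_le_div_iff₀ hck₀R hcR).mp this
      · have hcR : (c k : ℝ) ≤ 0 := by exact_mod_cast not_lt.mp h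
        have : τ * (c k : ℝ) ≤ 0 := mul_nonpos_of_nonneg_of_nonpos hτ0 hcR
        simp only [hlam']
        linarith [hlam0 k]
    have hlam's : ∀ k ∉ s.erase k₀, lam' k = 0 := by
      intro k hk
      rcases Finset.mem_erase.not.mp hk with hk'
      push_neg at hk'
      by_cases h : k ∈ s
      · have : k = k₀ := by
          by_contra hne; exact absurd h (by simpa [hne] using fun h2 => (hk' hne h).elim)
        subst this
        simp only [hlam', hτ]
        field_simp
        ring
      · simp [hlam', hlams k h, hcs k h]
    have hrel' : ∀ i, ∑ k, lam' k * (w k i : ℝ) = (v i : ℝ) := by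
      intro i
      have h1 : ∑ k, lam' k * (w k i : ℝ)
          = (∑ k, lam k * (w k i : ℝ)) - τ * ∑ k, (c k : ℝ) * (w k i : ℝ) := by
        rw [Finset.mul_sum, ← Finset.sum_sub_distrib]
        exact Finset.sum_congr rfl fun k _ => by simp only [hlam']; ring
      have h2 : ∑ k, (c k : ℝ) * (w k i : ℝ) = 0 := by
        have := hcrel i
        have : ((∑ k, c k * w k i : ℚ) : ℝ) = 0 := by rw [this]; simp
        push_cast at this
        exact this
      rw [h1, h2, hrel i, mul_zero, sub_zero]
    exact IH (s.erase k₀) (Finset.erase_ssubset hk₀s) lam' hlam'0 hlam's hrel'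
  · -- independent case
    push_neg at hdep
    -- v lies in the rational span
    have hvmem : v ∈ Submodule.span ℚ (w '' (↑s : Set (Fin n))) := by
      by_contra hns
      obtain ⟨a, ha0, hav⟩ := dual_sep _ v hns
      have hz : ∀ k ∈ s, ∑ i, a i * w k i = 0 := fun k hk =>
        ha0 (w k) (Submodule.subset_span ⟨k, by simpa using hk, rfl⟩)
      have : ∑ i, (a i : ℝ) * (v i : ℝ) = 0 := by
        have e1 : ∑ i, (a i : ℝ) * (v i : ℝ)
            = ∑ i, (a i : ℝ) * ∑ k, lam k * (w k i : ℝ) := by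
          exact Finset.sum_congr rfl fun i _ => by rw [hrel i]
        rw [e1, swap_sum]
        refine Finset.sum_eq_zero fun k _ => ?_
        by_cases hk : k ∈ s
        · have : ∑ i, (a i : ℝ) * (w k i : ℝ) = ((∑ i, a i * w k i : ℚ) : ℝ) := by
            push_cast; rfl
          rw [this, hz k hk]; simp
        · simp [hlams k hk]
      have : ((∑ i, a i * v i : ℚ) : ℝ) = 0 := by push_cast; exact this
      exact hav (by exact_mod_cast this)
    obtain ⟨mu, hmus, hmurel⟩ := span_coeffs w v s hvmem
    refine ⟨mu, fun k₀ => ?_, hmurel⟩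
    by_cases hk₀ : k₀ ∈ s
    · -- mu k₀ = lam k₀ ≥ 0
      have hnm : w k₀ ∉ Submodule.span ℚ (w '' (↑(s.erase k₀) : Set (Fin n))) := by
        intro hmem
        obtain ⟨ν, hνs, hνrel⟩ := span_coeffs w (w k₀) (s.erase k₀) hmem
        have hne : (fun k => (if k = k₀ then (1:ℚ) else 0) - ν k) ≠ 0 := by
          intro h
          have h0 := congrFun h k₀
          have : ν k₀ = 0 := hνs k₀ (Finset.notMem_erase k₀ s)
          simp [this] at h0
        have hsupp : ∀ k ∉ s, (if k = k₀ then (1:ℚ) else 0) - ν k = 0 := by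
          intro k hk
          have h1 : ν k = 0 := hνs k (fun hm => hk (Finset.mem_of_mem_erase hm))
          have h2 : k ≠ k₀ := fun h => hk (h ▸ hk₀)
          simp [h1, h2]
        obtain ⟨i, hi⟩ := hdep _ hne hsupp
        apply hi
        have : ∑ k, ((if k = k₀ then (1:ℚ) else 0) - ν k) * w k i
            = (∑ k, (if k = k₀ then (1:ℚ) else 0) * w k i) - ∑ k, ν k * w k i := by
          rw [← Finset.sum_sub_distrib]
          exact Finset.sum_congr rfl fun k _ => by ring
        rw [this, hνrel i]
        simp [Finset.sum_ite_eq']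
      obtain ⟨a, ha0, hak₀⟩ := dual_sep _ (w k₀) hnm
      have hz : ∀ k ∈ s.erase k₀, ∑ i, a i * w k i = 0 := fun k hk =>
        ha0 (w k) (Submodule.subset_span ⟨k, by simpa [and_comm] using hk, rfl⟩)
      -- evaluate the real relation
      have E1 : lam k₀ * ((∑ i, a i * w k₀ i : ℚ) : ℝ) = ∑ i, (a i : ℝ) * (v i : ℝ) := by
        have e1 : ∑ i, (a i : ℝ) * (v i : ℝ)
            = ∑ i, (a i : ℝ) * ∑ k, lam k * (w k i : ℝ) :=
          Finset.sum_congr rfl fun i _ => by rw [hrel i]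
        rw [e1, swap_sum]
        rw [Finset.sum_eq_single k₀]
        · congr 1; push_cast; rfl
        · intro k _ hkne
          by_cases hk : k ∈ s
          · have : ∑ i, (a i : ℝ) * (w k i : ℝ) = ((∑ i, a i * w k i : ℚ) : ℝ) := by
              push_cast; rfl
            rw [this, hz k (Finset.mem_erase.mpr ⟨hkne, hk⟩)]; simp
          · simp [hlams k hk]
        · intro h; exact absurd (Finset.mem_univ k₀) h
      have E2 : mu k₀ * (∑ i, a i * w k₀ i) = ∑ i, a i * v i := by
        have e1 : ∑ i, a i * v i = ∑ i, a i * ∑ k, mu k * w k i :=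
          Finset.sum_congr rfl fun i _ => by rw [hmurel i]
        rw [e1, swap_sumQ, Finset.sum_eq_single k₀]
        · intro k _ hkne
          by_cases hk : k ∈ s
          · rw [hz k (Finset.mem_erase.mpr ⟨hkne, hk⟩)]; simp
          · simp [hmus k hk]
        · intro h; exact absurd (Finset.mem_univ k₀) h
      have E2R : (mu k₀ : ℝ) * ((∑ i, a i * w k₀ i : ℚ) : ℝ)
          = ∑ i, (a i : ℝ) * (v i : ℝ) := by
        exact_mod_cast congrArg (fun q : ℚ => (q : ℝ)) E2
      have hcast : ((∑ i, a i * w k₀ i : ℚ) : ℝ) ≠ 0 := by exact_mod_cast hak₀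
      have : (mu k₀ : ℝ) = lam k₀ := by
        have := E1.trans E2R.symm
        exact mul_right_cancel₀ hcast this.symm
      have : (0:ℝ) ≤ (mu k₀ : ℝ) := this ▸ hlam0 k₀
      exact_mod_cast this
    · simp [hmus k₀ hk₀]


lemma rat_clear {n : ℕ} (mu : Fin n → ℚ) (h0 : ∀ k, 0 ≤ mu k) :
    ∃ (c : ℕ) (ν : Fin n → ℕ), 0 < c ∧ ∀ k, ((ν k : ℚ)) = (c : ℚ) * mu k := by
  refine ⟨∏ j, (mu j).den,
    fun k => ((∏ j, (mu j).den) / (mu k).den) * (mu k).num.toNat,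
    Finset.prod_pos (fun k _ => (mu k).pos), fun k => ?_⟩
  obtain ⟨e, he⟩ := Finset.dvd_prod_of_mem (fun j => (mu j).den) (Finset.mem_univ k)
  beta_reduce
  rw [he, Nat.mul_div_cancel_left e (mu k).pos]
  have hnum : (((mu k).num.toNat : ℤ)) = (mu k).num :=
    Int.toNat_of_nonneg (Rat.num_nonneg.mpr (h0 k))
  have h1 : ((mu k).den : ℚ) * mu k = ((mu k).num : ℚ) := by
    rw [mul_comm]; exact_mod_cast Rat.mul_den_eq_num (mu k)
  push_cast [hnum]
  rw [mul_comm ((mu k).den : ℚ) (e : ℚ), mul_assoc, h1]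
  congr 1
  exact_mod_cast hnum

/-- Key lemma: an integer point of the real cone of `M` lies in `M`. -/
lemma mem_of_toR_mem_cone {r : ℕ} (M : AddSubmonoid (Fin r → ℤ))
    (hnorm : IsNormalMonoid M) (hgp : gp M = ⊤) (v : Fin r → ℤ)
    (h : toR v ∈ coneM M) : v ∈ M := by
  rw [coneM, SetLike.mem_coe, Submodule.mem_span_set'] at h
  obtain ⟨n, f, g, hsum⟩ := h
  choose m hmM hmg using fun k => (g k).2
  have hrel : ∀ i, ∑ k, (f k : ℝ) * (((m k i : ℚ)) : ℝ) = (((v i : ℚ)) : ℝ) := by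
    intro i
    have := congrFun hsum i
    rw [Finset.sum_apply] at this
    simp only [toR] at this
    push_cast
    rw [← this]
    refine Finset.sum_congr rfl fun k _ => ?_
    rw [← hmg k, Pi.smul_apply, NNReal.smul_def, smul_eq_mul]
    rfl
  obtain ⟨mu, hmu0, hmurel⟩ := lp_aux (fun k i => ((m k i : ℚ))) (fun i => ((v i : ℚ)))
    Finset.univ (fun k => (f k : ℝ)) (fun k => (f k).2) (fun k hk => absurd (Finset.mem_univ k) hk)
    hrel
  obtain ⟨c, ν, hc, hν⟩ := rat_clear mu hmu0
  have hint : ∀ i, (c : ℤ) * v i = ∑ k, (ν k : ℤ) * m k i := by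
    intro i
    have : ((c : ℚ)) * ((v i : ℚ)) = ∑ k, ((ν k : ℚ)) * ((m k i : ℚ)) := by
      rw [← hmurel i, Finset.mul_sum]
      exact Finset.sum_congr rfl fun k _ => by rw [hν k]; ring
    exact_mod_cast this
  have hcv : c • v ∈ M := by
    have : c • v = ∑ k, ν k • m k := by
      funext i
      simp only [Finset.sum_apply, Pi.smul_apply, nsmul_eq_mul]
      exact hint i
    rw [this]
    exact AddSubmonoid.sum_mem M fun k _ => AddSubmonoid.nsmul_mem M (hmM k) (ν k)
  refine hnorm c v hc ?_ ?_
  · rw [hgp]; trivial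
  · rwa [natCast_zsmul]


section Main

variable {r : ℕ}

/-- Sum of coordinates in the basis `b`. -/
def sHom (b : Module.Basis (Fin r) ℤ (Fin r → ℤ)) : (Fin r → ℤ) →+ ℤ :=
  AddMonoidHom.mk' (fun v => ∑ j, b.repr v j)
    (by intro u v; simp [map_add, Finsupp.add_apply, Finset.sum_add_distrib])

/-- The defect homomorphism whose kernel is `ℤ(x₁ - ie) + ⋯ + ℤ(x_r - ie)`. -/
def psi (b : Module.Basis (Fin r) ℤ (Fin r → ℤ)) (i : ℕ) : (ℤ × (Fin r → ℤ)) →+ ℤ :=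
  AddMonoidHom.mk' (fun p => p.1 + (i : ℤ) * sHom b p.2)
    (by intro p q; simp [Prod.fst_add, Prod.snd_add, map_add]; ring)

lemma sHom_basis (b : Module.Basis (Fin r) ℤ (Fin r → ℤ)) (j : Fin r) : sHom b (b j) = 1 := by
  simp [sHom, AddMonoidHom.mk'_apply, Module.Basis.repr_self, Finsupp.single_apply]

lemma closure_gens_eq_ker (b : Module.Basis (Fin r) ℤ (Fin r → ℤ)) (i : ℕ) :
    AddSubgroup.closure (Set.range fun j => ((-(i : ℤ), b j) : ℤ × (Fin r → ℤ)))
      = (psi b i).ker := by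
  apply le_antisymm
  · rw [AddSubgroup.closure_le]
    rintro y ⟨j, rfl⟩
    simp only [SetLike.mem_coe, AddMonoidHom.mem_ker, psi, AddMonoidHom.mk'_apply]
    rw [sHom_basis]
    ring
  · intro p hp
    rw [AddMonoidHom.mem_ker, psi, AddMonoidHom.mk'_apply] at hp
    have hs : (sHom b) p.2 = ∑ j, b.repr p.2 j := rfl
    have hrepr : p = ∑ j, (b.repr p.2 j) • ((-(i : ℤ), b j) : ℤ × (Fin r → ℤ)) := by
      apply Prod.ext
      · simp only [Prod.fst_sum, Prod.smul_fst, smul_eq_mul]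
        rw [← Finset.sum_mul, mul_neg, mul_comm]
        rw [hs] at hp
        linarith [hp]
      · simp only [Prod.snd_sum, Prod.smul_snd]
        exact (b.sum_repr p.2).symm
    rw [hrepr]
    exact AddSubgroup.sum_mem _ fun j _ =>
      AddSubgroup.zsmul_mem _ (AddSubgroup.subset_closure (Set.mem_range_self j)) _

lemma mem_Mi_iff (M : AddSubmonoid (Fin r → ℤ)) (hnorm : IsNormalMonoid M) (hgp : gp M = ⊤)
    (b : Module.Basis (Fin r) ℤ (Fin r → ℤ)) (i : ℕ) (p : ℤ × (Fin r → ℤ)) :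
    p ∈ Mi M (⇑b) i ↔ p.2 ∈ M ∧ p.1 = -((i : ℤ) * sHom b p.2) := by
  constructor
  · rintro ⟨hcl, hcone⟩
    rw [closure_gens_eq_ker, AddMonoidHom.mem_ker, psi, AddMonoidHom.mk'_apply] at hcl
    exact ⟨mem_of_toR_mem_cone M hnorm hgp p.2 hcone, by linarith [hcl]⟩
  · rintro ⟨hm, hfst⟩
    constructor
    · rw [closure_gens_eq_ker, AddMonoidHom.mem_ker, psi, AddMonoidHom.mk'_apply, hfst]
      ring
    · exact Submodule.subset_span ⟨p.2, hm, rfl⟩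

/-- The lifting homomorphism `M → M_i`. -/
def LHom (b : Module.Basis (Fin r) ℤ (Fin r → ℤ)) (i : ℕ) : (Fin r → ℤ) →+ ℤ × (Fin r → ℤ) :=
  AddMonoidHom.mk' (fun v => (-((i : ℤ) * sHom b v), v))
    (by intro u v; simp [map_add, Prod.ext_iff]; ring)

lemma Mi_eq_image (M : AddSubmonoid (Fin r → ℤ)) (hnorm : IsNormalMonoid M) (hgp : gp M = ⊤)
    (b : Module.Basis (Fin r) ℤ (Fin r → ℤ)) (i : ℕ) :
    Mi M (⇑b) i = (LHom b i) '' (M : Set (Fin r → ℤ)) := by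
  ext p
  rw [mem_Mi_iff M hnorm hgp b i p]
  constructor
  · rintro ⟨hm, hfst⟩
    exact ⟨p.2, hm, by rw [LHom, AddMonoidHom.mk'_apply, ← hfst]⟩
  · rintro ⟨v, hv, rfl⟩
    exact ⟨hv, rfl⟩

end Main

end St7

/-- each M_i is a positive normal affine monoid, isomorphic as a monoid
to M = M₀. -/
theorem statement7 {r : ℕ} (M : AddSubmonoid (Fin r → ℤ))
    (hFG : M.FG) (hpos : IsPositiveMonoid M) (hnorm : IsNormalMonoid M) (hgp : gp M = ⊤)
    (x : Fin r → (Fin r → ℤ)) (hx : ∃ b : Module.Basis (Fin r) ℤ (Fin r → ℤ), x = ⇑b)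
    (hcone : coneM M ⊆
      (Submodule.span ℝ≥0 (Set.range fun j => toR (x j)) : Set (Fin r → ℝ))) :
    ∀ i : ℕ,
      (∃ S : Finset (ℤ × (Fin r → ℤ)), (S : Set (ℤ × (Fin r → ℤ))) ⊆ Mi M x i ∧
        Mi M x i = (AddSubmonoid.closure (S : Set (ℤ × (Fin r → ℤ))) : Set (ℤ × (Fin r → ℤ)))) ∧
      (∀ p ∈ Mi M x i, -p ∈ Mi M x i → p = 0) ∧
      (∀ (c : ℕ) (p : ℤ × (Fin r → ℤ)), 0 < c → p ∈ AddSubgroup.closure (Mi M x i) →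
        (c : ℤ) • p ∈ Mi M x i → p ∈ Mi M x i) ∧
      (∃ f : (ℤ × (Fin r → ℤ)) → (Fin r → ℤ),
        Set.BijOn f (Mi M x i) (M : Set (Fin r → ℤ)) ∧
        (∀ p ∈ Mi M x i, ∀ q ∈ Mi M x i, f (p + q) = f p + f q) ∧ f 0 = 0) := by
  obtain ⟨b, rfl⟩ := hx
  intro i
  have hchar := St7.mem_Mi_iff M hnorm hgp b i
  have himg := St7.Mi_eq_image M hnorm hgp b i
  refine ⟨?_, ?_, ?_, ?_⟩
  · -- finitely generated
    obtain ⟨T, hT⟩ := hFG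
    refine ⟨T.image (St7.LHom b i), ?_, ?_⟩
    · intro p hp
      simp only [Finset.coe_image, Set.mem_image, Finset.mem_coe] at hp
      obtain ⟨t, ht, rfl⟩ := hp
      rw [himg]
      exact ⟨t, by rw [← hT]; exact AddSubmonoid.subset_closure ht, rfl⟩
    · rw [himg, Finset.coe_image, ← AddMonoidHom.map_mclosure, hT, AddSubmonoid.coe_map]
  · -- positive
    intro p hp hneg
    obtain ⟨hm, hfst⟩ := (hchar p).mp hp
    obtain ⟨hm', _⟩ := (hchar (-p)).mp hneg
    have h2 : p.2 = 0 := hpos p.2 hm (by simpa using hm')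
    have h1 : p.1 = 0 := by rw [hfst, h2, map_zero, mul_zero, neg_zero]
    exact Prod.ext h1 h2
  · -- normal
    intro c p hc hpcl hcp
    obtain ⟨hm, hfst⟩ := (hchar _).mp hcp
    have hker : p ∈ (St7.psi b i).ker := by
      have hle : AddSubgroup.closure (Mi M (⇑b) i) ≤ (St7.psi b i).ker := by
        rw [AddSubgroup.closure_le]
        intro q hq
        have h := ((hchar q).mp hq).2
        simp only [SetLike.mem_coe, AddMonoidHom.mem_ker, St7.psi, AddMonoidHom.mk'_apply, h]
        ring
      exact hle hpcl
    have hsnd : p.2 ∈ M := by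
      refine hnorm c p.2 hc (by rw [hgp]; trivial) ?_
      have h : ((c : ℤ) • p).2 = (c : ℤ) • p.2 := rfl
      rwa [h] at hm
    refine (hchar p).mpr ⟨hsnd, ?_⟩
    rw [AddMonoidHom.mem_ker, St7.psi, AddMonoidHom.mk'_apply] at hker
    linarith [hker]
  · -- isomorphic to M
    refine ⟨Prod.snd, ⟨?_, ?_, ?_⟩, fun p _ q _ => rfl, rfl⟩
    · intro p hp; exact ((hchar p).mp hp).1
    · intro p hp q hq hpq
      obtain ⟨_, h1⟩ := (hchar p).mp hp
      obtain ⟨_, h2⟩ := (hchar q).mp hq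
      exact Prod.ext (by rw [h1, h2, hpq]) hpq
    · intro v hv
      exact ⟨(-((i : ℤ) * St7.sHom b v), v), (hchar _).mpr ⟨hv, rfl⟩, rfl⟩
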